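/- arXiv:2207.05607 — 2 statements merged into one kernel-verified Lean document; each statement's English description precedes it below -/
import Mathlib

section
/- There exist constants τ_Y > 0 and C > 0, depending only on n and the constants c_Y, C_Y, C_R, c_ρ, A_0, A_1, such that for every 0 < τ ≤ τ_Y, every 0 < ε ≤ τ_Y/10, every smooth ρ : ℝ^{n−1} → (−∞, 0] with |∂_{y'}ρ| ≤ c_ρ and |∂²_{y'}ρ| ≤ c_ρ, and every (y, ξ) ∈ ℝⁿ × ℝⁿ with y ∈ W(τ, ε) and p_ψ(y, ξ) = 0, one has |ξ_n| ≤ C τ_Y and |a(y', ξ') − 2| ≤ C τ_Y; i.e., the characteristic set of the conjugated symbol is contained in {a(y', ξ') = 2 + O(τ_Y), ξ_n = O(τ_Y)}. -/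
open scoped BigOperators

noncomputable section

/-- `ℝ^m` with its Euclidean norm. -/
abbrev Esp (m : ℕ) := EuclideanSpace ℝ (Fin m)

/-- The quadratic form with (real) coefficient matrix `M`, evaluated at `v`. -/
noncomputable def quadForm {m : ℕ} (M : Matrix (Fin m) (Fin m) ℝ) (v : Esp m) : ℝ :=
  ∑ i, ∑ j, M i j * v i * v j

/-- The quadratic form with real coefficient matrix `M`, evaluated at a complex
covector `v`. -/
noncomputable def quadFormC {m : ℕ} (M : Matrix (Fin m) (Fin m) ℝ) (v : Fin m → ℂ) : ℂ :=
  ∑ i, ∑ j, (M i j : ℂ) * v i * v j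

/-- The complex tangential covector `ξ' + i ∂_{y'}ψ(y)` where `ψ(y) = (⋯)yₙ + 2τρ(y')`,
so that `∂_{y'_i}ψ = 2τ ∂_{y'_i}ρ(y')`. -/
noncomputable def zetaPrime {m : ℕ} (τ : ℝ) (ρ : Esp m → ℝ) (y' ξ' : Esp m) :
    Fin m → ℂ :=
  fun i => (ξ' i : ℂ) + Complex.I * (2 * τ * fderiv ℝ ρ y' (EuclideanSpace.single i 1))

/-- The Poisson bracket `{f, g} = Σⱼ (∂_{ξⱼ}f ∂_{yⱼ}g − ∂_{yⱼ}f ∂_{ξⱼ}g)` of two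
functions on phase space `ℝⁿ_y × ℝⁿ_ξ`, where `y = (y', yₙ)` and `ξ = (ξ', ξₙ)`. -/
noncomputable def poissonBracket {m : ℕ}
    (f g : (Esp m × ℝ) × (Esp m × ℝ) → ℝ) (z : (Esp m × ℝ) × (Esp m × ℝ)) : ℝ :=
  (∑ j : Fin m,
      (fderiv ℝ f z ((0 : Esp m × ℝ), (EuclideanSpace.single j (1 : ℝ), (0 : ℝ)))
          * fderiv ℝ g z ((EuclideanSpace.single j (1 : ℝ), (0 : ℝ)), (0 : Esp m × ℝ))
        - fderiv ℝ f z ((EuclideanSpace.single j (1 : ℝ), (0 : ℝ)), (0 : Esp m × ℝ))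
          * fderiv ℝ g z ((0 : Esp m × ℝ), (EuclideanSpace.single j (1 : ℝ), (0 : ℝ)))))
    + (fderiv ℝ f z ((0 : Esp m × ℝ), ((0 : Esp m), (1 : ℝ)))
          * fderiv ℝ g z (((0 : Esp m), (1 : ℝ)), (0 : Esp m × ℝ))
        - fderiv ℝ f z (((0 : Esp m), (1 : ℝ)), (0 : Esp m × ℝ))
          * fderiv ℝ g z ((0 : Esp m × ℝ), ((0 : Esp m), (1 : ℝ))))

/-- The conjugated symbol `p_ψ(y, ξ) = p(y, ξ + i ∂_yψ(y))` for
`p(y,ξ) = ξₙ² + a(y',ξ') − 2yₙ b(y',ξ') + R(y,ξ') − 1` and `ψ(y) = yₙ + 2τρ(y')`,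
where `a`, `b`, `R` are the quadratic forms with coefficient matrices `A`, `B`, `R`. -/
noncomputable def pPsi {m : ℕ} (A B : Esp m → Matrix (Fin m) (Fin m) ℝ)
    (R : Esp m × ℝ → Matrix (Fin m) (Fin m) ℝ) (τ : ℝ) (ρ : Esp m → ℝ)
    (z : (Esp m × ℝ) × (Esp m × ℝ)) : ℂ :=
  ((z.2.2 : ℂ) + Complex.I) ^ 2
    + quadFormC (A z.1.1) (zetaPrime τ ρ z.1.1 z.2.1)
    - 2 * (z.1.2 : ℂ) * quadFormC (B z.1.1) (zetaPrime τ ρ z.1.1 z.2.1)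
    + quadFormC (R z.1) (zetaPrime τ ρ z.1.1 z.2.1)
    - 1

-- auxiliary lemmas

lemma norm_sq_eq {m : ℕ} (v : Esp m) : ‖v‖^2 = ∑ i, (v i)^2 := by
  rw [EuclideanSpace.norm_eq, Real.sq_sqrt]
  · simp [sq]
  · positivity

lemma sum_abs_sq {m : ℕ} (v : Esp m) : ‖v‖^2 ≤ (∑ i, |v i|)^2 := by
  rw [norm_sq_eq]
  calc ∑ i, (v i)^2 = ∑ i, |v i|^2 := by simp [sq_abs]
    _ ≤ (∑ i, |v i|)^2 := Finset.sum_sq_le_sq_sum_of_nonneg (fun _ _ => abs_nonneg _)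

lemma sq_sum_abs {m : ℕ} (v : Esp m) : (∑ i, |v i|)^2 ≤ m * ‖v‖^2 := by
  rw [norm_sq_eq]
  calc (∑ i, |v i|)^2 ≤ ((Finset.univ : Finset (Fin m)).card : ℝ) * ∑ i, |v i|^2 :=
        sq_sum_le_card_mul_sum_sq
    _ = m * ∑ i, (v i)^2 := by simp [sq_abs]

lemma quadForm_abs_le {m : ℕ} (M : Matrix (Fin m) (Fin m) ℝ) (K : ℝ)
    (hM : ∀ i j, |M i j| ≤ K) (v : Esp m) :
    |quadForm M v| ≤ K * (∑ i, |v i|)^2 := by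
  calc |∑ i, ∑ j, M i j * v i * v j| ≤ ∑ i, |∑ j, M i j * v i * v j| :=
        Finset.abs_sum_le_sum_abs _ _
    _ ≤ ∑ i, ∑ j, |M i j * v i * v j| :=
        Finset.sum_le_sum fun i _ => Finset.abs_sum_le_sum_abs _ _
    _ ≤ ∑ i, ∑ j, K * (|v i| * |v j|) := by
        refine Finset.sum_le_sum fun i _ => Finset.sum_le_sum fun j _ => ?_
        rw [abs_mul, abs_mul, mul_assoc]
        exact mul_le_mul_of_nonneg_right (hM i j) (by positivity)
    _ = K * (∑ i, |v i|)^2 := by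
        rw [sq, Finset.sum_mul_sum]
        rw [Finset.mul_sum]
        exact Finset.sum_congr rfl fun i _ => by rw [Finset.mul_sum]

lemma cross_abs_le {m : ℕ} (M : Matrix (Fin m) (Fin m) ℝ) (K : ℝ)
    (hM : ∀ i j, |M i j| ≤ K) (x y : Fin m → ℝ) :
    |∑ i, ∑ j, M i j * (x i * y j + y i * x j)| ≤ 2 * K * (∑ i, |x i|) * (∑ i, |y i|) := by
  calc |∑ i, ∑ j, M i j * (x i * y j + y i * x j)|
      ≤ ∑ i, ∑ j, |M i j * (x i * y j + y i * x j)| := by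
        refine le_trans (Finset.abs_sum_le_sum_abs _ _) ?_
        exact Finset.sum_le_sum fun i _ => Finset.abs_sum_le_sum_abs _ _
    _ ≤ ∑ i, ∑ j, K * (|x i| * |y j| + |y i| * |x j|) := by
        refine Finset.sum_le_sum fun i _ => Finset.sum_le_sum fun j _ => ?_
        rw [abs_mul]
        have hK : 0 ≤ K := le_trans (abs_nonneg _) (hM i j)
        calc |M i j| * |x i * y j + y i * x j|
            ≤ K * (|x i * y j| + |y i * x j|) :=
              mul_le_mul (hM i j) (abs_add_le _ _) (abs_nonneg _) hK
          _ = K * (|x i| * |y j| + |y i| * |x j|) := by rw [abs_mul, abs_mul]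
    _ = 2 * K * (∑ i, |x i|) * (∑ i, |y i|) := by
        have e1 : ∑ i, ∑ j, K * (|x i| * |y j|) = K * ((∑ i, |x i|) * (∑ j, |y j|)) := by
          rw [Finset.sum_mul_sum]; simp only [Finset.mul_sum]
        have e2 : ∑ i, ∑ j, K * (|y i| * |x j|) = K * ((∑ i, |y i|) * (∑ j, |x j|)) := by
          rw [Finset.sum_mul_sum]; simp only [Finset.mul_sum]
        calc ∑ i, ∑ j, K * (|x i| * |y j| + |y i| * |x j|)
            = (∑ i, ∑ j, K * (|x i| * |y j|)) + ∑ i, ∑ j, K * (|y i| * |x j|) := by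
              simp only [mul_add, Finset.sum_add_distrib]
          _ = _ := by rw [e1, e2]; ring

lemma cross_eq {m : ℕ} (M : Matrix (Fin m) (Fin m) ℝ) (x y : Esp m) :
    ∑ i, ∑ j, M i j * (x i * y j + y i * x j)
      = quadForm M (x + y) - quadForm M x - quadForm M y := by
  simp only [quadForm, PiLp.add_apply, ← Finset.sum_sub_distrib]
  exact Finset.sum_congr rfl fun i _ => Finset.sum_congr rfl fun j _ => by ring

lemma quadFormC_decomp {m : ℕ} (M : Matrix (Fin m) (Fin m) ℝ) (x y : Esp m) :
    quadFormC M (fun i => (x i : ℂ) + Complex.I * ((y i : ℝ) : ℂ))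
      = ((quadForm M x - quadForm M y : ℝ) : ℂ)
        + Complex.I * ((∑ i, ∑ j, M i j * (x i * y j + y i * x j) : ℝ) : ℂ) := by
  unfold quadFormC quadForm
  push_cast
  rw [Finset.mul_sum, ← Finset.sum_sub_distrib, ← Finset.sum_add_distrib]
  refine Finset.sum_congr rfl fun i _ => ?_
  rw [Finset.mul_sum, ← Finset.sum_sub_distrib, ← Finset.sum_add_distrib]
  refine Finset.sum_congr rfl fun j _ => ?_
  linear_combination ((M i j : ℂ) * (y i) * (y j)) * Complex.I_sq


lemma stepA {M τY A0 A1 CR s t yn qAx : ℝ}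
    (hM1 : 1 ≤ M) (hA0 : 0 < A0) (hA1 : 0 < A1) (hCR : 0 < CR)
    (hτY0 : 0 < τY) (hτYA1 : τY * (8*M*(A0+CR)+1) ≤ A1)
    (hs0 : 0 ≤ s) (ht0 : 0 ≤ t) (ht1 : t ≤ 1)
    (hyn : |yn| ≤ 2*τY) (hyn2 : yn^2 ≤ 2*τY)
    (hlows : A1 * s^2 ≤ M * qAx)
    (hq2 : qAx ≤ 2 + (A0*t^2 + 2* |yn| *(A0*s^2 + A0*t^2) + CR*yn^2*s^2 + CR*yn^2*t^2)) :
    s^2 ≤ 2*M*(2+A0+A1)/A1 := by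
  have hM0 : (0:ℝ) < M := lt_of_lt_of_le one_pos hM1
  have ht2 : t^2 ≤ 1 := by nlinarith [mul_le_mul ht1 ht1 ht0 zero_le_one]
  have p1 : A0*t^2 ≤ A0 := by
    have := mul_le_mul_of_nonneg_left ht2 hA0.le
    linarith
  have p2 : 2* |yn| *(A0*s^2+A0*t^2) ≤ 4*τY*(A0*s^2) + 4*τY*A0 := by
    have h1 : 2*|yn| ≤ 4*τY := by linarith
    have h2 : (0:ℝ) ≤ A0*s^2 + A0*t^2 := by positivity
    have h3 : 2* |yn| *(A0*s^2+A0*t^2) ≤ 4*τY*(A0*s^2+A0*t^2) :=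
      mul_le_mul_of_nonneg_right h1 h2
    have h4 : 4*τY*(A0*t^2) ≤ 4*τY*A0 := by
      apply mul_le_mul_of_nonneg_left p1; positivity
    linarith
  have hcr : CR*yn^2 ≤ 2*τY*CR := by
    have := mul_le_mul_of_nonneg_left hyn2 hCR.le
    linarith
  have p3 : CR*yn^2*s^2 ≤ (2*τY*CR)*s^2 := mul_le_mul_of_nonneg_right hcr (sq_nonneg s)
  have p4 : CR*yn^2*t^2 ≤ 2*τY*CR := by
    have h1 : (0:ℝ) ≤ CR*yn^2 := by positivity
    have h2 : CR*yn^2*t^2 ≤ CR*yn^2*1 := by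
      apply mul_le_mul_of_nonneg_left ht2 h1
    linarith
  have hq3 : qAx ≤ 2 + A0 + (4*τY*A0 + 2*τY*CR)*s^2 + 4*τY*A0 + 2*τY*CR := by
    linarith [hq2, p1, p2, p3, p4]
  have hP : (0:ℝ) ≤ M*τY*A0 := by positivity
  have hQ : (0:ℝ) ≤ M*τY*CR := by positivity
  have hPa : τY*A0 ≤ M*τY*A0 := by
    nlinarith [mul_nonneg (mul_nonneg (sub_nonneg.2 hM1) hτY0.le) hA0.le]
  have hQa : τY*CR ≤ M*τY*CR := by
    nlinarith [mul_nonneg (mul_nonneg (sub_nonneg.2 hM1) hτY0.le) hCR.le]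
  have hτYA1' : 8*(M*τY*A0) + 8*(M*τY*CR) + τY ≤ A1 := by linarith [hτYA1]
  have hsmall : 4*τY*A0 + 2*τY*CR ≤ A1 := by linarith [hτYA1', hPa, hQa, hP, hQ, hτY0.le]
  have hMq : M * qAx ≤ M * (2 + A0 + A1 + (4*τY*A0 + 2*τY*CR)*s^2) := by
    apply mul_le_mul_of_nonneg_left _ hM0.le
    linarith [hq3, hsmall]
  have hkey8 : M*(4*τY*A0 + 2*τY*CR) ≤ A1/2 := by linarith [hτYA1', hP, hQ, hτY0.le]
  have hM8 : (M*(4*τY*A0 + 2*τY*CR))*s^2 ≤ (A1/2)*s^2 :=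
    mul_le_mul_of_nonneg_right hkey8 (sq_nonneg s)
  have hfin : A1 * s^2 ≤ M * (2 + A0 + A1) + (A1/2)*s^2 := by linarith [hlows, hMq, hM8]
  rw [le_div_iff₀ hA1]
  linarith [hfin]

lemma stepB {A0 CR M cρ τY S2 s t yn ξn : ℝ}
    (hA0 : 0 < A0) (hCR : 0 < CR) (hcρ : 0 < cρ) (hM1 : 1 ≤ M)
    (hτY0 : 0 < τY) (hτYhalf : τY ≤ 1/2)
    (hs0 : 0 ≤ s) (ht0 : 0 ≤ t) (ht1 : t ≤ 1)
    (htτY : t ≤ 2*M*cρ*τY)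
    (hyn : |yn| ≤ 2*τY) (hyn2 : yn^2 ≤ 2*τY)
    (hs2 : s^2 ≤ S2)
    (hb : 2* |ξn| ≤ 2*A0*s*t + 2* |yn| *(2*A0*s*t) + CR*yn^2*(3*s^2+3*t^2)) :
    |ξn| ≤ ((6*A0*M*cρ + 3*CR)*(S2+1)) * τY := by
  have hM0 : (0:ℝ) < M := lt_of_lt_of_le one_pos hM1
  have hS20 : 0 ≤ S2 := le_trans (sq_nonneg s) hs2
  have hsS : s ≤ S2 + 1 := by nlinarith [sq_nonneg (s-1), hs2]
  have hT1 : 2*A0*s*t ≤ 2*A0*((S2+1)*(2*M*cρ*τY)) := by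
    have h1 : s*t ≤ (S2+1)*t := mul_le_mul_of_nonneg_right hsS ht0
    have h2 : (S2+1)*t ≤ (S2+1)*(2*M*cρ*τY) :=
      mul_le_mul_of_nonneg_left htτY (by linarith)
    have h3 := mul_le_mul_of_nonneg_left (le_trans h1 h2) (by positivity : (0:ℝ) ≤ 2*A0)
    linarith [h3]
  have hT1' : (0:ℝ) ≤ 2*A0*s*t := by positivity
  have hT2 : 2* |yn| *(2*A0*s*t) ≤ 2*(2*A0*((S2+1)*(2*M*cρ*τY))) := by
    have h1 : 2*|yn| ≤ 2 := by linarith [hyn, hτYhalf]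
    calc 2* |yn| *(2*A0*s*t) ≤ 2*(2*A0*s*t) :=
          mul_le_mul_of_nonneg_right h1 hT1'
      _ ≤ 2*(2*A0*((S2+1)*(2*M*cρ*τY))) := by linarith
  have hcr : CR*yn^2 ≤ 2*τY*CR := by
    have := mul_le_mul_of_nonneg_left hyn2 hCR.le
    linarith
  have ht2 : t^2 ≤ 1 := by nlinarith [mul_le_mul ht1 ht1 ht0 zero_le_one]
  have h3 : 3*s^2+3*t^2 ≤ 3*(S2+1) := by linarith [hs2, ht2]
  have hT3 : CR*yn^2*(3*s^2+3*t^2) ≤ (2*τY*CR)*(3*(S2+1)) := by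
    have h4 : (0:ℝ) ≤ 3*s^2+3*t^2 := by positivity
    have h5 : CR*yn^2*(3*s^2+3*t^2) ≤ (2*τY*CR)*(3*s^2+3*t^2) :=
      mul_le_mul_of_nonneg_right hcr h4
    have h6 : (2*τY*CR)*(3*s^2+3*t^2) ≤ (2*τY*CR)*(3*(S2+1)) :=
      mul_le_mul_of_nonneg_left h3 (by positivity)
    linarith
  linarith [hb, hT1, hT2, hT3]

lemma stepC {A0 CR M cρ τY S2 C1 s t yn ξn qAx : ℝ}
    (hA0 : 0 < A0) (hCR : 0 < CR) (hcρ : 0 < cρ) (hM1 : 1 ≤ M)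
    (hτY0 : 0 < τY) (hτYhalf : τY ≤ 1/2)
    (hs0 : 0 ≤ s) (ht0 : 0 ≤ t) (ht1 : t ≤ 1)
    (htτY : t ≤ 2*M*cρ*τY)
    (hyn : |yn| ≤ 2*τY) (hyn2 : yn^2 ≤ 2*τY)
    (hs2 : s^2 ≤ S2)
    (hC10 : 0 ≤ C1) (hξn : |ξn| ≤ C1 * τY)
    (hqA2 : |qAx - 2| ≤ ξn^2 + (A0*t^2 + 2* |yn| *(A0*s^2+A0*t^2) + CR*yn^2*s^2 + CR*yn^2*t^2)) :
    |qAx - 2| ≤ (C1^2 + 2*A0*M*cρ + (4*A0+2*CR)*(S2+1)) * τY := by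
  have hM0 : (0:ℝ) < M := lt_of_lt_of_le one_pos hM1
  have hS20 : 0 ≤ S2 := le_trans (sq_nonneg s) hs2
  have hξn2 : ξn^2 ≤ C1^2 * τY := by
    have h1 : ξn^2 = |ξn|^2 := (sq_abs ξn).symm
    have h2 : |ξn|^2 ≤ (C1*τY)^2 := by
      nlinarith [abs_nonneg ξn, hξn, mul_le_mul hξn hξn (abs_nonneg ξn) (by positivity)]
    have h3 : (C1*τY)^2 ≤ C1^2*τY := by
      nlinarith [mul_nonneg (mul_nonneg (sq_nonneg C1) hτY0.le) (by linarith : (0:ℝ) ≤ 1 - τY)]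
    linarith
  have ht2 : t^2 ≤ t := by nlinarith [mul_le_mul_of_nonneg_right ht1 ht0]
  have p1 : A0*t^2 ≤ A0*(2*M*cρ*τY) := by
    have h1 : t^2 ≤ 2*M*cρ*τY := le_trans ht2 htτY
    exact mul_le_mul_of_nonneg_left h1 hA0.le
  have p2 : 2* |yn| *(A0*s^2+A0*t^2) ≤ 4*τY*(A0*(S2+1)) := by
    have h1 : A0*s^2+A0*t^2 ≤ A0*(S2+1) := by
      have ha := mul_le_mul_of_nonneg_left hs2 hA0.le
      have hb2 : t^2 ≤ 1 := by nlinarith [mul_le_mul ht1 ht1 ht0 zero_le_one]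
      have hc := mul_le_mul_of_nonneg_left hb2 hA0.le
      linarith
    have h2 : (0:ℝ) ≤ A0*s^2+A0*t^2 := by positivity
    have h3 : 2*|yn| ≤ 4*τY := by linarith
    calc 2* |yn| *(A0*s^2+A0*t^2) ≤ 4*τY*(A0*s^2+A0*t^2) :=
          mul_le_mul_of_nonneg_right h3 h2
      _ ≤ 4*τY*(A0*(S2+1)) := mul_le_mul_of_nonneg_left h1 (by positivity)
  have hcr : CR*yn^2 ≤ 2*τY*CR := by
    have := mul_le_mul_of_nonneg_left hyn2 hCR.le
    linarith
  have p3 : CR*yn^2*s^2 + CR*yn^2*t^2 ≤ (2*τY*CR)*(S2+1) := by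
    have ht2' : t^2 ≤ 1 := by nlinarith [mul_le_mul ht1 ht1 ht0 zero_le_one]
    have h1 : s^2+t^2 ≤ S2+1 := by linarith [hs2]
    have h2 : CR*yn^2*(s^2+t^2) ≤ (2*τY*CR)*(s^2+t^2) :=
      mul_le_mul_of_nonneg_right hcr (by positivity)
    have h3 : (2*τY*CR)*(s^2+t^2) ≤ (2*τY*CR)*(S2+1) :=
      mul_le_mul_of_nonneg_left h1 (by positivity)
    linarith
  linarith [hqA2, hξn2, p1, p2, p3]

set_option maxHeartbeats 1000000 in
/-- there are `τ_Y > 0` and `C > 0`, depending only on `n = m + 1` and the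
constants `c_Y, C_Y, C_R, c_ρ, A₀, A₁`, such that for all data `a, b, R` as in the
context, all `0 < τ ≤ τ_Y`, `0 < ε ≤ τ_Y/10`, all smooth `ρ ≤ 0` with first and second
derivatives bounded by `c_ρ`, and every `(y, ξ)` with `y ∈ W(τ, ε)` and
`p_ψ(y, ξ) = 0`, one has `|ξₙ| ≤ C τ_Y` and `|a(y', ξ') − 2| ≤ C τ_Y`; i.e. the
characteristic set of the conjugated symbol lies in
`{a(y',ξ') = 2 + O(τ_Y), ξₙ = O(τ_Y)}`. -/
theorem statement1 (m : ℕ) (hm : 1 ≤ m)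
    (cY CY CR cρ A0 A1 : ℝ)
    (hcY : 0 < cY) (hCY : 0 < CY) (hCR : 0 < CR) (hcρ : 0 < cρ)
    (hA0 : 0 < A0) (hA1 : 0 < A1) :
    ∃ τY : ℝ, 0 < τY ∧ ∃ C : ℝ, 0 < C ∧
      ∀ (A B : Esp m → Matrix (Fin m) (Fin m) ℝ)
        (R : Esp m × ℝ → Matrix (Fin m) (Fin m) ℝ),
        (∀ i j, ContDiffOn ℝ (⊤ : ℕ∞) (fun y' => A y' i j) {y' : Esp m | ‖y'‖ < 2 * cY}) →
        (∀ i j, ContDiffOn ℝ (⊤ : ℕ∞) (fun y' => B y' i j) {y' : Esp m | ‖y'‖ < 2 * cY}) →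
        (∀ i j, ContDiff ℝ (⊤ : ℕ∞) (fun y => R y i j)) →
        (∀ y' : Esp m, ‖y'‖ < 2 * cY → ∀ ξ' : Esp m,
          A1 * ‖ξ'‖ ^ 2 ≤ quadForm (A y') ξ') →
        (∀ y' : Esp m, ‖y'‖ < 2 * cY → ∀ ξ' : Esp m,
          CY * quadForm (A y') ξ' ≤ quadForm (B y') ξ') →
        (∀ y' : Esp m, ‖y'‖ < 2 * cY → ∀ i j,
          |A y' i j| ≤ A0 ∧ |B y' i j| ≤ A0 ∧
          ∀ k, |fderiv ℝ (fun w => A w i j) y' (EuclideanSpace.single k (1 : ℝ))| ≤ A0 ∧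
               |fderiv ℝ (fun w => B w i j) y' (EuclideanSpace.single k (1 : ℝ))| ≤ A0) →
        (∀ y : Esp m × ℝ, |y.2| ≤ 1 → ∀ ξ' : Esp m,
          |quadForm (R y) ξ'| ≤ CR * y.2 ^ 2 * ‖ξ'‖ ^ 2 ∧
          ‖fderiv ℝ (fun w => quadForm (R w) ξ') y‖ ≤ CR * |y.2| * ‖ξ'‖ ^ 2) →
        ∀ τ : ℝ, 0 < τ → τ ≤ τY →
        ∀ ε : ℝ, 0 < ε → ε ≤ τY / 10 →
        ∀ ρ : Esp m → ℝ, ContDiff ℝ (⊤ : ℕ∞) ρ → (∀ y', ρ y' ≤ 0) →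
          (∀ y', ‖fderiv ℝ ρ y'‖ ≤ cρ) →
          (∀ y', ‖fderiv ℝ (fderiv ℝ ρ) y'‖ ≤ cρ) →
        ∀ z : (Esp m × ℝ) × (Esp m × ℝ),
          ‖z.1.1‖ < cY → -(2 * ε) < z.1.2 → z.1.2 < τ + 2 * ε →
          pPsi A B R τ ρ z = 0 →
          |z.2.2| ≤ C * τY ∧ |quadForm (A z.1.1) z.2.1 - 2| ≤ C * τY := by
  set M : ℝ := (m : ℝ) with hMdef
  have hM1 : (1:ℝ) ≤ M := by rw [hMdef]; exact_mod_cast hm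
  have hM0 : (0:ℝ) < M := lt_of_lt_of_le one_pos hM1
  set τY : ℝ := min (min ((1:ℝ)/2) (1/(2*M*cρ+1))) (A1/(8*M*(A0+CR)+1)) with hτYdef
  have hτY0 : 0 < τY := by
    refine lt_min (lt_min one_half_pos ?_) ?_ <;> positivity
  have hτYhalf : τY ≤ 1/2 := le_trans (min_le_left _ _) (min_le_left _ _)
  have hτYcρ : τY * (2*M*cρ+1) ≤ 1 := by
    have h : τY ≤ 1/(2*M*cρ+1) := by
      rw [hτYdef]; exact le_trans (min_le_left _ _) (min_le_right _ _)
    have hd : (0:ℝ) < 2*M*cρ+1 := by positivity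
    calc τY * (2*M*cρ+1) ≤ (1/(2*M*cρ+1)) * (2*M*cρ+1) := by
          exact mul_le_mul_of_nonneg_right h hd.le
      _ = 1 := by field_simp
  have hτYA1 : τY * (8*M*(A0+CR)+1) ≤ A1 := by
    have h : τY ≤ A1/(8*M*(A0+CR)+1) := by
      rw [hτYdef]; exact min_le_right _ _
    have hd : (0:ℝ) < 8*M*(A0+CR)+1 := by positivity
    calc τY * (8*M*(A0+CR)+1) ≤ (A1/(8*M*(A0+CR)+1)) * (8*M*(A0+CR)+1) :=
          mul_le_mul_of_nonneg_right h hd.le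
      _ = A1 := by field_simp
  set S2 : ℝ := 2*M*(2+A0+A1)/A1 with hS2def
  have hS20 : 0 < S2 := by positivity
  set C1 : ℝ := (6*A0*M*cρ + 3*CR)*(S2+1) with hC1def
  have hC10 : 0 < C1 := by positivity
  set C2 : ℝ := C1^2 + 2*A0*M*cρ + (4*A0+2*CR)*(S2+1) with hC2def
  have hC20 : 0 < C2 := by positivity
  refine ⟨τY, hτY0, C1 + C2 + 1, by positivity, ?_⟩
  intro A B R hAsm hBsm hRsm hAlow hBA hEnt hRbd τ hτ0 hττY ε hε0 hετY ρ hρsm hρ0 hρ1 hρ2 z hzy hzl hzr hp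
  clear hAsm hBsm hRsm hBA hρsm hρ0 hρ2
  obtain ⟨⟨y', yn⟩, ξ', ξn⟩ := z
  simp only at hzy hzl hzr ⊢
  -- basic geometric facts
  have hy'2 : ‖y'‖ < 2 * cY := by linarith
  have hyn : |yn| ≤ 2 * τY := by
    rw [abs_le]
    constructor <;> linarith
  have hyn1 : |yn| ≤ 1 := le_trans hyn (by linarith)
  -- the imaginary part of the tangential covector
  set η : Esp m := WithLp.toLp 2 (fun i => 2 * τ * fderiv ℝ ρ y' (EuclideanSpace.single i 1)) with hηdef
  set s : ℝ := ∑ i, |ξ' i| with hsdef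
  set t : ℝ := ∑ i, |η i| with htdef
  have hs0 : 0 ≤ s := Finset.sum_nonneg fun _ _ => abs_nonneg _
  have ht0 : 0 ≤ t := Finset.sum_nonneg fun _ _ => abs_nonneg _
  have hηb : ∀ i, |η i| ≤ 2 * τ * cρ := by
    intro i
    have h1 : |fderiv ℝ ρ y' (EuclideanSpace.single i 1)| ≤ cρ := by
      calc |fderiv ℝ ρ y' (EuclideanSpace.single i 1)|
          ≤ ‖fderiv ℝ ρ y'‖ * ‖EuclideanSpace.single i (1:ℝ)‖ :=
            (fderiv ℝ ρ y').le_opNorm _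
        _ = ‖fderiv ℝ ρ y'‖ := by rw [EuclideanSpace.norm_single]; simp
        _ ≤ cρ := hρ1 y'
    have h2 : η i = 2 * τ * fderiv ℝ ρ y' (EuclideanSpace.single i 1) := rfl
    rw [h2, abs_mul]
    have h3 : |(2:ℝ) * τ| = 2 * τ := abs_of_nonneg (by linarith)
    rw [h3]
    exact mul_le_mul_of_nonneg_left h1 (by linarith)
  have ht : t ≤ 2 * M * cρ * τ := by
    calc t ≤ ∑ _i : Fin m, 2 * τ * cρ := Finset.sum_le_sum fun i _ => hηb i
      _ = M * (2 * τ * cρ) := by rw [Finset.sum_const]; simp [hMdef]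
      _ = 2 * M * cρ * τ := by ring
  have htτY : t ≤ 2 * M * cρ * τY := by
    have h : 2 * M * cρ * τ ≤ 2 * M * cρ * τY := by
      apply mul_le_mul_of_nonneg_left hττY; positivity
    linarith
  -- decomposition of the conjugated symbol into real and imaginary parts
  set qAx : ℝ := quadForm (A y') ξ' with hqAx
  set qAy : ℝ := quadForm (A y') η with hqAy
  set qBx : ℝ := quadForm (B y') ξ' with hqBx
  set qBy : ℝ := quadForm (B y') η with hqBy
  set qRx : ℝ := quadForm (R (y', yn)) ξ' with hqRx
  set qRy : ℝ := quadForm (R (y', yn)) η with hqRy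
  set qRz : ℝ := quadForm (R (y', yn)) (ξ' + η) with hqRz
  set cA : ℝ := ∑ i, ∑ j, A y' i j * (ξ' i * η j + η i * ξ' j) with hcA
  set cB : ℝ := ∑ i, ∑ j, B y' i j * (ξ' i * η j + η i * ξ' j) with hcB
  set cR : ℝ := ∑ i, ∑ j, R (y', yn) i j * (ξ' i * η j + η i * ξ' j) with hcR
  have hzeta : zetaPrime τ ρ y' ξ' = fun i => ((ξ' i : ℝ) : ℂ) + Complex.I * ((η i : ℝ) : ℂ) := by
    funext i
    simp only [zetaPrime, hηdef, PiLp.toLp_apply]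
    push_cast
    ring
  have hkey : pPsi A B R τ ρ ((y', yn), ξ', ξn)
      = (((ξn^2 - 2 + (qAx - qAy) - 2*yn*(qBx - qBy) + (qRx - qRy)) : ℝ) : ℂ)
        + Complex.I * (((2*ξn + cA - 2*yn*cB + cR) : ℝ) : ℂ) := by
    simp only [pPsi]
    rw [hzeta, quadFormC_decomp, quadFormC_decomp, quadFormC_decomp]
    rw [hqAx, hqAy, hqBx, hqBy, hqRx, hqRy, hcA, hcB, hcR]
    push_cast
    linear_combination Complex.I_sq
  rw [hkey] at hp
  have hX : ξn^2 - 2 + (qAx - qAy) - 2*yn*(qBx - qBy) + (qRx - qRy) = 0 := by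
    have h := congrArg Complex.re hp
    simpa [← Complex.ofReal_pow] using h
  have hY : 2*ξn + cA - 2*yn*cB + cR = 0 := by
    have h := congrArg Complex.im hp
    simpa [← Complex.ofReal_pow] using h
  clear hp hkey hzeta
  -- entrywise bounds
  have hE := hEnt y' hy'2
  have bqAy : |qAy| ≤ A0 * t^2 := quadForm_abs_le _ _ (fun i j => (hE i j).1) η
  have bqBx : |qBx| ≤ A0 * s^2 := quadForm_abs_le _ _ (fun i j => (hE i j).2.1) ξ'
  have bqBy : |qBy| ≤ A0 * t^2 := quadForm_abs_le _ _ (fun i j => (hE i j).2.1) η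
  have bcA : |cA| ≤ 2 * A0 * s * t := cross_abs_le _ _ (fun i j => (hE i j).1) ξ' η
  have bcB : |cB| ≤ 2 * A0 * s * t := cross_abs_le _ _ (fun i j => (hE i j).2.1) ξ' η
  -- bounds involving R
  have hnx : ‖ξ'‖^2 ≤ s^2 := sum_abs_sq ξ'
  have hny : ‖η‖^2 ≤ t^2 := sum_abs_sq η
  have hRy2 : (0:ℝ) ≤ CR * yn^2 := by positivity
  have bqRx : |qRx| ≤ CR * yn^2 * s^2 := by
    have h := (hRbd (y', yn) hyn1 ξ').1
    simp only at h
    exact le_trans h (mul_le_mul_of_nonneg_left hnx hRy2)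
  have bqRy : |qRy| ≤ CR * yn^2 * t^2 := by
    have h := (hRbd (y', yn) hyn1 η).1
    simp only at h
    exact le_trans h (mul_le_mul_of_nonneg_left hny hRy2)
  have bqRz : |qRz| ≤ CR * yn^2 * (s+t)^2 := by
    have hsum : ∑ i, |(ξ' + η) i| ≤ s + t := by
      rw [hsdef, htdef, ← Finset.sum_add_distrib]
      exact Finset.sum_le_sum fun i _ => by
        rw [PiLp.add_apply]; exact abs_add_le _ _
    have hnxy : ‖ξ' + η‖^2 ≤ (s+t)^2 := by
      refine le_trans (sum_abs_sq _) ?_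
      have h0 : 0 ≤ ∑ i, |(ξ' + η) i| := Finset.sum_nonneg fun _ _ => abs_nonneg _
      exact pow_le_pow_left₀ h0 hsum 2
    have h := (hRbd (y', yn) hyn1 (ξ' + η)).1
    simp only at h
    exact le_trans h (mul_le_mul_of_nonneg_left hnxy hRy2)
  have hcReq : cR = qRz - qRx - qRy := cross_eq _ ξ' η
  -- lower bound for the quadratic form a
  set nx : ℝ := ‖ξ'‖^2 with hnxdef
  have hnx0 : 0 ≤ nx := by rw [hnxdef]; positivity
  have hlow : A1 * nx ≤ qAx := hAlow y' hy'2 ξ'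
  have hsM : s^2 ≤ M * nx := sq_sum_abs ξ'
  -- clean up the context before the arithmetic
  clear_value M τY S2 C1 C2 η s t nx qAx qAy qBx qBy qRx qRy qRz cA cB cR
  clear hAlow hEnt hRbd hE hηb hρ1 hτ0 hε0 hετY hzl hzr hzy hy'2 hnx hny hRy2
  clear ht hττY
  clear hηdef hsdef htdef hqAx hqAy hqBx hqBy hqRx hqRy hqRz hcA hcB hcR hnxdef
  clear A B R ρ τ ε ξ' y'
  -- derived elementary facts
  have hMcρ1 : 2*M*cρ*τY + τY ≤ 1 := by linarith [hτYcρ]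
  have ht1 : t ≤ 1 := by linarith [htτY, hτY0.le]
  have hyn2 : yn^2 ≤ 2 * τY := by
    have h1 : |yn| * |yn| ≤ (2*τY) * (2*τY) :=
      mul_le_mul hyn hyn (abs_nonneg yn) (by positivity)
    have h2 : (2*τY) * (2*τY) ≤ 2*τY := by
      nlinarith [mul_nonneg hτY0.le (by linarith : (0:ℝ) ≤ 1 - 2*τY)]
    calc yn^2 = |yn| * |yn| := by rw [← sq_abs yn]; ring
      _ ≤ 2*τY := le_trans h1 h2
  have hlows : A1 * s^2 ≤ M * qAx := by
    have h2 : A1 * s^2 ≤ A1 * (M * nx) := mul_le_mul_of_nonneg_left hsM hA1.le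
    have h3 : M * (A1 * nx) ≤ M * qAx := mul_le_mul_of_nonneg_left hlow hM0.le
    linarith [h2, h3]
  have bcR : |cR| ≤ CR * yn^2 * (3*s^2 + 3*t^2) := by
    have h3 : (s+t)^2 ≤ 2*s^2 + 2*t^2 := by nlinarith [sq_nonneg (s-t)]
    have h4 : |qRz| ≤ CR * yn^2 * (2*s^2+2*t^2) := by
      have h5 := mul_le_mul_of_nonneg_left h3 (by positivity : (0:ℝ) ≤ CR * yn^2)
      linarith
    have e1 := abs_le.1 h4
    have e2 := abs_le.1 bqRx
    have e3 := abs_le.1 bqRy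
    rw [hcReq, abs_le]
    constructor <;> linarith
  -- the perturbation D and its bound
  have hDbd : |qAy + 2*yn*(qBx - qBy) - qRx + qRy|
      ≤ A0*t^2 + 2* |yn| *(A0*s^2 + A0*t^2) + CR*yn^2*s^2 + CR*yn^2*t^2 := by
    have hb : |qBx - qBy| ≤ A0*s^2 + A0*t^2 := by
      have e1 := abs_le.1 bqBx
      have e2 := abs_le.1 bqBy
      rw [abs_le]; constructor <;> linarith
    have hprod : |2*yn*(qBx - qBy)| ≤ 2* |yn| *(A0*s^2+A0*t^2) := by
      rw [abs_mul, abs_mul]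
      have h9 : |(2:ℝ)| = 2 := by norm_num
      rw [h9]
      exact mul_le_mul_of_nonneg_left hb (by positivity)
    have e1 := abs_le.1 bqAy
    have e2 := abs_le.1 hprod
    have e3 := abs_le.1 bqRx
    have e4 := abs_le.1 bqRy
    rw [abs_le]; constructor <;> linarith
  have hq2 : qAx ≤ 2 + (A0*t^2 + 2* |yn| *(A0*s^2 + A0*t^2) + CR*yn^2*s^2 + CR*yn^2*t^2) := by
    have hD := (abs_le.1 hDbd).2
    linarith [sq_nonneg ξn]
  -- Step A : bound on s^2
  have hs2 : s^2 ≤ S2 := by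
    rw [hS2def]
    exact stepA hM1 hA0 hA1 hCR hτY0 hτYA1 hs0 ht0 ht1 hyn hyn2 hlows hq2
  -- Step B : bound on ξn
  have h2a : 2* |ξn| = |cA - 2*yn*cB + cR| := by
    have h0 : 2*ξn = -(cA - 2*yn*cB + cR) := by linarith
    calc 2* |ξn| = |2*ξn| := by rw [abs_mul]; norm_num
      _ = _ := by rw [h0, abs_neg]
  have hprod2 : |2*yn*cB| ≤ 2* |yn| *(2*A0*s*t) := by
    rw [abs_mul, abs_mul]
    have h9 : |(2:ℝ)| = 2 := by norm_num
    rw [h9]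
    exact mul_le_mul_of_nonneg_left bcB (by positivity)
  have hb2 : 2* |ξn| ≤ 2*A0*s*t + 2* |yn| *(2*A0*s*t) + CR*yn^2*(3*s^2+3*t^2) := by
    rw [h2a]
    have e1 := abs_le.1 bcA
    have e2 := abs_le.1 hprod2
    have e3 := abs_le.1 bcR
    rw [abs_le]; constructor <;> linarith
  have hξn : |ξn| ≤ C1 * τY := by
    have h := stepB hA0 hCR hcρ hM1 hτY0 hτYhalf hs0 ht0 ht1 htτY hyn hyn2 hs2 hb2
    have heq : C1 * τY = ((6*A0*M*cρ + 3*CR)*(S2+1)) * τY := by rw [hC1def]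
    linarith [heq ▸ h]
  -- Step C : bound on |qAx - 2|
  have hqA2 : |qAx - 2| ≤ ξn^2 + (A0*t^2 + 2* |yn| *(A0*s^2+A0*t^2) + CR*yn^2*s^2 + CR*yn^2*t^2) := by
    have hD := abs_le.1 hDbd
    rw [abs_le]
    constructor <;> linarith [sq_nonneg ξn]
  have hq4 : |qAx - 2| ≤ C2 * τY := by
    have h := stepC hA0 hCR hcρ hM1 hτY0 hτYhalf hs0 ht0 ht1 htτY hyn hyn2 hs2 hC10.le hξn hqA2
    have heq : C2 * τY = (C1^2 + 2*A0*M*cρ + (4*A0+2*CR)*(S2+1)) * τY := by rw [hC2def]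
    linarith [heq ▸ h]
  refine ⟨?_, ?_⟩
  · have h : C1 * τY ≤ (C1 + C2 + 1) * τY :=
      mul_le_mul_of_nonneg_right (by linarith) hτY0.le
    linarith
  · have h : C2 * τY ≤ (C1 + C2 + 1) * τY :=
      mul_le_mul_of_nonneg_right (by linarith) hτY0.le
    linarith
end
end

section
/- Let q : ℝⁿ × ℝⁿ → ℂ belong to S⁰, and let B : ℝⁿ × ℝ^{n−1} → ℝ be smooth, bounded together with all its partial derivatives, and satisfy B(x, ξ') ≥ c₀ for some constant c₀ > 0. Then the quotient symbol a₀(x, ξ) := q(x, ξ) / (ξ_n − i B(x, ξ')) is a smooth function on ℝⁿ × ℝⁿ that is bounded together with all of its partial derivatives; that is, a₀ ∈ S⁰. -/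
open Finset Nat

/-- A function on a normed space belongs to the symbol class `S⁰` if it is smooth and
bounded together with all of its (iterated Fréchet) derivatives. -/
def IsSymbolS0 {D : Type*} [NormedAddCommGroup D] [NormedSpace ℝ D]
    {F : Type*} [NormedAddCommGroup F] [NormedSpace ℝ F] (f : D → F) : Prop :=
  ContDiff ℝ (⊤ : ℕ∞) f ∧ ∀ k : ℕ, ∃ M : ℝ, ∀ z, ‖iteratedFDeriv ℝ k f z‖ ≤ M

/-- Bound for real iterated derivatives of complex inversion away from zero. -/
lemma norm_iteratedFDerivWithin_inv_le (n : ℕ) {c : ℝ} (hc : 0 < c) {w : ℂ} (hw : c ≤ ‖w‖) :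
    ‖iteratedFDerivWithin ℝ n (Inv.inv : ℂ → ℂ) {0}ᶜ w‖ ≤ n ! * c⁻¹ ^ (n + 1) := by
  have hw0 : w ≠ 0 := by
    intro h
    rw [h, norm_zero] at hw
    linarith
  have hsO : IsOpen ({0}ᶜ : Set ℂ) := isOpen_compl_singleton
  have hmem : w ∈ ({0}ᶜ : Set ℂ) := hw0
  have huC : UniqueDiffOn ℂ ({0}ᶜ : Set ℂ) := hsO.uniqueDiffOn
  have huR : UniqueDiffOn ℝ ({0}ᶜ : Set ℂ) := hsO.uniqueDiffOn
  have hT : HasFTaylorSeriesUpToOn (⊤ : ℕ∞) (Inv.inv : ℂ → ℂ)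
      (fun x => (ftaylorSeriesWithin ℂ (Inv.inv : ℂ → ℂ) {0}ᶜ x).restrictScalars ℝ) {0}ᶜ :=
    (((contDiffOn_inv ℂ) : ContDiffOn ℂ (⊤ : ℕ∞) (Inv.inv : ℂ → ℂ) {0}ᶜ).ftaylorSeriesWithin
      huC).restrictScalars ℝ
  have h1 : iteratedFDerivWithin ℝ n (Inv.inv : ℂ → ℂ) {0}ᶜ w
      = (iteratedFDerivWithin ℂ n (Inv.inv : ℂ → ℂ) {0}ᶜ w).restrictScalars ℝ :=
    (hT.eq_iteratedFDerivWithin_of_uniqueDiffOn (mod_cast le_top) huR hmem).symm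
  rw [h1, ContinuousMultilinearMap.norm_restrictScalars,
    iteratedFDerivWithin_of_isOpen n hsO hmem,
    norm_iteratedFDeriv_eq_norm_iteratedDeriv, iteratedDeriv_eq_iterate, iter_deriv_inv,
    norm_mul, norm_mul, norm_pow, norm_neg, norm_one, one_pow, one_mul, Complex.norm_natCast,
    norm_zpow]
  have h2 : ∀ i ∈ range n, ‖(-1 - (i : ℂ))‖ = ((i + 1 : ℕ) : ℝ) := by
    intro i _
    have : (-1 - (i : ℂ)) = -(((i + 1 : ℕ) : ℂ)) := by push_cast; ring
    rw [this, norm_neg, Complex.norm_natCast]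
  have h3 : (∏ i ∈ range n, ((i + 1 : ℕ) : ℝ)) = (n ! : ℝ) := by
    rw [← Nat.cast_prod]
    norm_cast
    exact Finset.prod_range_add_one_eq_factorial n
  have h4 : (-1 - (n : ℤ)) = -((n + 1 : ℕ) : ℤ) := by push_cast; ring
  rw [h4, zpow_neg, zpow_natCast, ← inv_pow]
  have h5 : ‖w‖⁻¹ ≤ c⁻¹ := inv_anti₀ hc hw
  have h6 : (0:ℝ) ≤ ‖w‖⁻¹ := inv_nonneg.2 (norm_nonneg w)
  exact mul_le_mul_of_nonneg_left (pow_le_pow_left₀ h6 h5 _) (Nat.cast_nonneg _)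

lemma norm_iteratedFDeriv_clm_le {E : Type*} [NormedAddCommGroup E] [NormedSpace ℝ E]
    {F : Type*} [NormedAddCommGroup F] [NormedSpace ℝ F]
    (c : E →L[ℝ] F) {i : ℕ} (hi : 1 ≤ i) (x : E) :
    ‖iteratedFDeriv ℝ i (⇑c) x‖ ≤ ‖c‖ := by
  obtain ⟨k, rfl⟩ := Nat.exists_eq_add_of_le' hi
  rw [← norm_iteratedFDeriv_fderiv]
  have h : (fderiv ℝ (⇑c)) = fun _ : E => c := by
    ext1 y
    exact c.fderiv
  rw [h]
  rcases Nat.eq_zero_or_pos k with hk | hk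
  · subst hk
    rw [norm_iteratedFDeriv_zero]
  · rw [iteratedFDeriv_const_of_ne (Nat.pos_iff_ne_zero.mp hk)]
    simp

lemma IsSymbolS0.mul {D : Type*} [NormedAddCommGroup D] [NormedSpace ℝ D]
    {f g : D → ℂ} (hf : IsSymbolS0 f) (hg : IsSymbolS0 g) :
    IsSymbolS0 (fun z => f z * g z) := by
  obtain ⟨hfs, hfb⟩ := hf
  obtain ⟨hgs, hgb⟩ := hg
  choose Cf hCf using hfb
  choose Cg hCg using hgb
  refine ⟨hfs.mul hgs, fun k => ⟨∑ i ∈ range (k + 1), (k.choose i : ℝ) * |Cf i| * |Cg (k - i)|,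
    fun z => ?_⟩⟩
  refine (norm_iteratedFDeriv_mul_le (𝕜 := ℝ) hfs hgs z (mod_cast le_top)).trans ?_
  refine Finset.sum_le_sum fun i _ => ?_
  gcongr
  · exact (hCf i z).trans (le_abs_self _)
  · exact (hCg (k - i) z).trans (le_abs_self _)

/-- if `q ∈ S⁰` and `B` is smooth, bounded with all derivatives, with
`B ≥ c₀ > 0`, then the quotient symbol `a₀(x,ξ) = q(x,ξ)/(ξₙ - i B(x,ξ'))` is in `S⁰`.
Here `n = m + 1`, points are `x ∈ ℝⁿ` and `ξ = (ξ', ξₙ) ∈ ℝ^{n-1} × ℝ`. -/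
theorem statement12 (m : ℕ)
    (q : (Fin (m + 1) → ℝ) × ((Fin m → ℝ) × ℝ) → ℂ)
    (hq : IsSymbolS0 q)
    (B : (Fin (m + 1) → ℝ) × (Fin m → ℝ) → ℝ)
    (hB : IsSymbolS0 B)
    (c₀ : ℝ) (hc₀ : 0 < c₀)
    (hBlower : ∀ (x : Fin (m + 1) → ℝ) (ξ' : Fin m → ℝ), c₀ ≤ B (x, ξ')) :
    IsSymbolS0 (fun z => q z / ((z.2.2 : ℂ) - Complex.I * (B (z.1, z.2.1) : ℂ))) := by
  classical
  let E := (Fin (m + 1) → ℝ) × ((Fin m → ℝ) × ℝ)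
  let P : E →L[ℝ] ((Fin (m + 1) → ℝ) × (Fin m → ℝ)) :=
    (ContinuousLinearMap.fst ℝ _ _).prod
      ((ContinuousLinearMap.fst ℝ _ _).comp (ContinuousLinearMap.snd ℝ _ _))
  let l : E →L[ℝ] ℂ :=
    Complex.ofRealCLM.comp ((ContinuousLinearMap.snd ℝ _ _).comp (ContinuousLinearMap.snd ℝ _ _))
  let mI : ℝ →ₗᵢ[ℝ] ℂ :=
    ⟨LinearMap.toSpanSingleton ℝ ℂ (-Complex.I), fun r => by
      simp [LinearMap.toSpanSingleton_apply, norm_smul]⟩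
  set d : E → ℂ := fun z => l z + mI (B (P z)) with hd
  have hd_eq : ∀ z : E, (z.2.2 : ℂ) - Complex.I * (B (z.1, z.2.1) : ℂ) = d z := by
    intro z
    have hPz : P z = (z.1, z.2.1) := rfl
    have hlz : l z = (z.2.2 : ℂ) := rfl
    have hmIz : ∀ r : ℝ, mI r = r • (-Complex.I) := fun r => rfl
    rw [hd]
    simp only [hPz, hlz, hmIz, Complex.real_smul]
    ring
  have hBd : ∀ z : E, c₀ ≤ ‖d z‖ := by
    intro z
    rw [← hd_eq z]
    set b := B (z.1, z.2.1) with hb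
    have him : ((z.2.2 : ℂ) - Complex.I * (b : ℂ)).im = -b := by simp
    calc c₀ ≤ b := hBlower _ _
      _ ≤ |(-b)| := by rw [abs_neg]; exact le_abs_self b
      _ = |((z.2.2 : ℂ) - Complex.I * (b : ℂ)).im| := by rw [him]
      _ ≤ ‖(z.2.2 : ℂ) - Complex.I * (b : ℂ)‖ := Complex.abs_im_le_norm _
  have hdne : ∀ z : E, d z ≠ 0 := by
    intro z h
    have := hBd z
    rw [h, norm_zero] at this
    linarith
  have hdsmooth : ContDiff ℝ (⊤ : ℕ∞) d :=
    l.contDiff.add (mI.contDiff.comp (hB.1.comp P.contDiff))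
  have hl : ‖l‖ ≤ 1 := by
    refine l.opNorm_le_bound zero_le_one fun z => ?_
    rw [one_mul]
    calc ‖l z‖ = ‖z.2.2‖ := by
          have : l z = (z.2.2 : ℂ) := rfl
          rw [this, Complex.norm_real]
      _ ≤ ‖z.2‖ := norm_snd_le z.2
      _ ≤ ‖z‖ := norm_snd_le z
  have hP : ‖P‖ ≤ 1 := by
    refine P.opNorm_le_bound zero_le_one fun z => ?_
    rw [one_mul]
    calc ‖P z‖ = max ‖z.1‖ ‖z.2.1‖ := rfl
      _ ≤ max ‖z.1‖ ‖z.2‖ := max_le_max le_rfl (norm_fst_le z.2)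
      _ = ‖z‖ := rfl
  obtain ⟨hBs, hBb⟩ := hB
  choose CB hCB using hBb
  have hdB : ∀ (i : ℕ), 1 ≤ i → ∀ x : E, ‖iteratedFDeriv ℝ i d x‖ ≤ 1 + |CB i| := by
    intro i hi x
    have hsum : d = ⇑l + fun z => mI (B (P z)) := rfl
    have hadd : iteratedFDeriv ℝ i d x
        = iteratedFDeriv ℝ i (⇑l) x + iteratedFDeriv ℝ i (fun z : E => mI (B (P z))) x := by
      rw [hsum]
      exact iteratedFDeriv_add_apply l.contDiff.contDiffAt
        ((mI.contDiff.comp (hBs.comp P.contDiff)).of_le (by exact_mod_cast le_top)).contDiffAt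
    have h2 : ‖iteratedFDeriv ℝ i (fun z : E => mI (B (P z))) x‖ ≤ |CB i| := by
      have hcomp1 : (fun z : E => mI (B (P z))) = ⇑mI ∘ (B ∘ ⇑P) := rfl
      rw [hcomp1, mI.norm_iteratedFDeriv_comp_left (hBs.comp P.contDiff).contDiffAt (mod_cast le_top)]
      rw [ContinuousLinearMap.iteratedFDeriv_comp_right P hBs x (mod_cast le_top)]
      refine (ContinuousMultilinearMap.norm_compContinuousLinearMap_le _ _).trans ?_
      have hPprod : (∏ _j : Fin i, ‖P‖) ≤ 1 := by
        rw [Finset.prod_const]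
        exact pow_le_one₀ (norm_nonneg _) hP
      calc ‖iteratedFDeriv ℝ i B (P x)‖ * ∏ _j : Fin i, ‖P‖
          ≤ |CB i| * 1 := mul_le_mul ((hCB i (P x)).trans (le_abs_self _)) hPprod
            (Finset.prod_nonneg fun _ _ => norm_nonneg _) (abs_nonneg _)
        _ = |CB i| := mul_one _
    calc ‖iteratedFDeriv ℝ i d x‖
        ≤ ‖iteratedFDeriv ℝ i (⇑l) x‖ + ‖iteratedFDeriv ℝ i (fun z : E => mI (B (P z))) x‖ := by
          rw [hadd]; exact norm_add_le _ _
      _ ≤ 1 + |CB i| := add_le_add ((norm_iteratedFDeriv_clm_le l hi x).trans hl) h2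
  -- the inverse of d is a symbol
  have hginv : IsSymbolS0 (fun z : E => (d z)⁻¹) := by
    refine ⟨hdsmooth.inv hdne, fun k => ?_⟩
    set Ck := (k ! : ℝ) * (max c₀⁻¹ 1) ^ (k + 1) with hCk
    set Dk := 1 + ∑ i ∈ range (k + 1), |CB i| with hDk
    have hDk1 : (1:ℝ) ≤ Dk := by
      rw [hDk]
      exact le_add_of_nonneg_right (Finset.sum_nonneg fun _ _ => abs_nonneg _)
    refine ⟨k ! * Ck * Dk ^ k, fun x => ?_⟩
    have hcomp : (fun z : E => (d z)⁻¹) = Inv.inv ∘ d := rfl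
    rw [hcomp, ← iteratedFDerivWithin_univ]
    refine norm_iteratedFDerivWithin_comp_le (t := ({0}ᶜ : Set ℂ)) (N := ((⊤ : ℕ∞) : WithTop ℕ∞))
      (((contDiffOn_inv ℂ) : ContDiffOn ℂ (⊤ : ℕ∞) (Inv.inv : ℂ → ℂ) {0}ᶜ).restrict_scalars ℝ)
      hdsmooth.contDiffOn (mod_cast le_top)
      isOpen_compl_singleton.uniqueDiffOn uniqueDiffOn_univ
      (fun z _ => hdne z) (Set.mem_univ x) ?_ ?_
    · intro i hik
      refine (norm_iteratedFDerivWithin_inv_le i hc₀ (hBd x)).trans ?_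
      rw [hCk]
      have h1 : (i ! : ℝ) ≤ (k ! : ℝ) := by exact_mod_cast Nat.factorial_le hik
      have h2 : c₀⁻¹ ^ (i + 1) ≤ (max c₀⁻¹ 1) ^ (k + 1) := by
        calc c₀⁻¹ ^ (i + 1) ≤ (max c₀⁻¹ 1) ^ (i + 1) :=
              pow_le_pow_left₀ (inv_nonneg.2 hc₀.le) (le_max_left _ _) _
          _ ≤ (max c₀⁻¹ 1) ^ (k + 1) := pow_le_pow_right₀ (le_max_right _ _) (by omega)
      exact mul_le_mul h1 h2 (by positivity) (Nat.cast_nonneg _)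
    · intro i hi1 hik
      rw [iteratedFDerivWithin_univ]
      refine ((hdB i hi1 x).trans ?_)
      have hstep : 1 + |CB i| ≤ Dk := by
        rw [hDk]
        gcongr
        exact Finset.single_le_sum (fun j _ => abs_nonneg (CB j)) (mem_range.mpr (by omega))
      exact hstep.trans (le_self_pow₀ hDk1 (by omega))
  have heq : (fun z : E => q z / ((z.2.2 : ℂ) - Complex.I * (B (z.1, z.2.1) : ℂ)))
      = fun z : E => q z * (d z)⁻¹ := by
    funext z
    rw [div_eq_mul_inv, hd_eq z]
  rw [heq]
  exact hq.mul hginv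
end
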